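/- Let t > 1, W a constant algebraic Weyl tensor on ℝ^4, and for y near −e_4 define Ā_{ij}(y) as the sum over n ∈ ℤ\{0} of W-dependent terms as follows: Ā_{ij}(y) = −(1/3) Σ_{n>0} W_{μijν}(t^n y+e_4)^μ(t^n y+e_4)^ν/|t^n y+e_4|^4 − (1/3) Σ_{n>0}[W_{μijν}(t^{-n} y+e_4)^μ(t^{-n} y+e_4)^ν/|t^{-n} y+e_4|^4 − W_{4ij4}] + (1/3){C_0(t) W_{4ij4} + C_1(t)[(W_{kij4}+W_{4ijk})(y+e_4)^k − 4 W_{4ij4}(y+e_4)_4]}, with C_0, C_1 as defined. Then Ā(−e_4) = 0 and ∇Ā(−e_4) = 0. -/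

import Mathlib

noncomputable section StmtAux

namespace StmtAux

/-- coordinate projection as a CLM -/
def pr (k : Fin 4) : (Fin 4 → ℝ) →L[ℝ] ℝ := ContinuousLinearMap.proj k

lemma pr_apply (k : Fin 4) (x : Fin 4 → ℝ) : pr k x = x k := rfl

lemma pr_norm_le (k : Fin 4) : ‖pr k‖ ≤ 1 :=
  (pr k).opNorm_le_bound zero_le_one (fun x => by
    simpa [pr_apply] using norm_le_pi_norm x k)

def Qf (M : Fin 4 → Fin 4 → ℝ) (u : Fin 4 → ℝ) : ℝ := ∑ μ, ∑ ν, M μ ν * u μ * u ν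

def Nf (u : Fin 4 → ℝ) : ℝ := ∑ k, u k ^ 2

def phi (e : Fin 4 → ℝ) (s : ℝ) (y : Fin 4 → ℝ) : Fin 4 → ℝ := fun k => s * y k + e k

def Ff (M : Fin 4 → Fin 4 → ℝ) (e : Fin 4 → ℝ) (s : ℝ) (y : Fin 4 → ℝ) : ℝ :=
  Qf M (phi e s y) / (Nf (phi e s y)) ^ 2

/-- derivative of `y ↦ Qf M (phi e s y)` -/
def DQ (M : Fin 4 → Fin 4 → ℝ) (s : ℝ) (u : Fin 4 → ℝ) : (Fin 4 → ℝ) →L[ℝ] ℝ :=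
  ∑ μ, ∑ ν, ((M μ ν * u μ) • (s • pr ν) + u ν • (M μ ν • (s • pr μ)))

/-- derivative of `y ↦ Nf (phi e s y)` -/
def DN (s : ℝ) (u : Fin 4 → ℝ) : (Fin 4 → ℝ) →L[ℝ] ℝ :=
  ∑ k, (2 * u k) • (s • pr k)

lemma hasFDerivAt_coord (e : Fin 4 → ℝ) (s : ℝ) (k : Fin 4) (y : Fin 4 → ℝ) :
    HasFDerivAt (fun y : Fin 4 → ℝ => s * y k + e k) (s • pr k) y := by
  simpa [pr_apply] using (((pr k).hasFDerivAt (x := y)).const_mul s).add_const (e k)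

lemma hasFDerivAt_Q (M : Fin 4 → Fin 4 → ℝ) (e : Fin 4 → ℝ) (s : ℝ) (y : Fin 4 → ℝ) :
    HasFDerivAt (fun y => Qf M (phi e s y)) (DQ M s (phi e s y)) y := by
  unfold Qf DQ phi
  apply HasFDerivAt.fun_sum
  intro μ _
  apply HasFDerivAt.fun_sum
  intro ν _
  have h1 := (hasFDerivAt_coord e s μ y).const_mul (M μ ν)
  have h2 := hasFDerivAt_coord e s ν y
  simpa [mul_comm, mul_assoc, mul_left_comm] using h1.fun_mul h2

lemma hasFDerivAt_N (e : Fin 4 → ℝ) (s : ℝ) (y : Fin 4 → ℝ) :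
    HasFDerivAt (fun y => Nf (phi e s y)) (DN s (phi e s y)) y := by
  unfold Nf DN phi
  apply HasFDerivAt.fun_sum
  intro k _
  have h := hasFDerivAt_coord e s k y
  have := h.fun_mul h
  simp only [pow_two]
  rw [two_mul, add_smul]
  exact this


/-- derivative of `Ff M e s` at `y` -/
def DF (M : Fin 4 → Fin 4 → ℝ) (e : Fin 4 → ℝ) (s : ℝ) (y : Fin 4 → ℝ) :
    (Fin 4 → ℝ) →L[ℝ] ℝ :=
  Qf M (phi e s y) •
      ((-((Nf (phi e s y) ^ 2) ^ 2)⁻¹) •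
        (Nf (phi e s y) • DN s (phi e s y) + Nf (phi e s y) • DN s (phi e s y)))
    + ((Nf (phi e s y) ^ 2)⁻¹) • DQ M s (phi e s y)

lemma hasFDerivAt_Ff (M : Fin 4 → Fin 4 → ℝ) (e : Fin 4 → ℝ) (s : ℝ) (y : Fin 4 → ℝ)
    (hne : Nf (phi e s y) ≠ 0) : HasFDerivAt (Ff M e s) (DF M e s y) y := by
  have hQ := hasFDerivAt_Q M e s y
  have hN := hasFDerivAt_N e s y
  have hN2 : HasFDerivAt (fun y => (Nf (phi e s y)) ^ 2)
      (Nf (phi e s y) • DN s (phi e s y) + Nf (phi e s y) • DN s (phi e s y)) y := by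
    simpa [pow_two] using hN.fun_mul hN
  have hne2 : (Nf (phi e s y)) ^ 2 ≠ 0 := pow_ne_zero _ hne
  have hinv : HasFDerivAt (fun y => ((Nf (phi e s y)) ^ 2)⁻¹)
      ((-(((Nf (phi e s y)) ^ 2) ^ 2)⁻¹) •
        (Nf (phi e s y) • DN s (phi e s y) + Nf (phi e s y) • DN s (phi e s y))) y := by
    have h := (hasDerivAt_inv hne2).comp_hasFDerivAt y hN2
    simpa [Function.comp_def] using h
  have := hQ.mul hinv
  have heq : ∀ z, Ff M e s z = Qf M (phi e s z) * ((Nf (phi e s z)) ^ 2)⁻¹ := by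
    intro z; rw [Ff, div_eq_mul_inv]
  rw [show Ff M e s = fun z => Qf M (phi e s z) * ((Nf (phi e s z)) ^ 2)⁻¹ from funext heq]
  rw [DF]
  exact this


def CW (M : Fin 4 → Fin 4 → ℝ) : ℝ := ∑ μ, ∑ ν, |M μ ν|

lemma CW_nonneg (M : Fin 4 → Fin 4 → ℝ) : 0 ≤ CW M := by
  apply Finset.sum_nonneg; intro μ _; apply Finset.sum_nonneg; intro ν _; positivity

section bounds

variable {M : Fin 4 → Fin 4 → ℝ} {u : Fin 4 → ℝ} {s m : ℝ}

lemma Qf_bound (hU : ∀ k, |u k| ≤ |u 3|) : |Qf M u| ≤ CW M * |u 3| ^ 2 := by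
  have h : ∀ μ ν : Fin 4, |M μ ν * u μ * u ν| ≤ |M μ ν| * (|u 3| * |u 3|) := by
    intro μ ν
    rw [abs_mul, abs_mul, mul_assoc]
    exact mul_le_mul_of_nonneg_left
      (mul_le_mul (hU μ) (hU ν) (abs_nonneg _) (abs_nonneg _)) (abs_nonneg _)
  calc |Qf M u| ≤ ∑ μ, |∑ ν, M μ ν * u μ * u ν| := Finset.abs_sum_le_sum_abs _ _
    _ ≤ ∑ μ, ∑ ν, |M μ ν * u μ * u ν| := by
        apply Finset.sum_le_sum; intro μ _; exact Finset.abs_sum_le_sum_abs _ _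
    _ ≤ ∑ μ, ∑ ν, |M μ ν| * (|u 3| * |u 3|) := by
        apply Finset.sum_le_sum; intro μ _; apply Finset.sum_le_sum; intro ν _; exact h μ ν
    _ = CW M * |u 3| ^ 2 := by
        simp only [CW, Finset.sum_mul]
        apply Finset.sum_congr rfl; intro μ _
        apply Finset.sum_congr rfl; intro ν _
        ring

lemma DQ_bound (hs : 0 < s) (hU : ∀ k, |u k| ≤ |u 3|) :
    ‖DQ M s u‖ ≤ 2 * s * CW M * |u 3| := by
  have h : ∀ μ ν : Fin 4,
      ‖(M μ ν * u μ) • (s • pr ν) + u ν • (M μ ν • (s • pr μ))‖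
        ≤ |M μ ν| * (2 * s * |u 3|) := by
    intro μ ν
    refine (norm_add_le _ _).trans ?_
    have h1 : ‖(M μ ν * u μ) • (s • pr ν)‖ ≤ |M μ ν| * (s * |u 3|) := by
      rw [norm_smul (M μ ν * u μ) (s • pr ν), norm_smul s (pr ν), Real.norm_eq_abs,
        Real.norm_eq_abs, abs_mul, abs_of_pos hs]
      calc |M μ ν| * |u μ| * (s * ‖pr ν‖) ≤ |M μ ν| * |u 3| * (s * 1) :=
            mul_le_mul (mul_le_mul_of_nonneg_left (hU μ) (abs_nonneg _))
              (mul_le_mul_of_nonneg_left (pr_norm_le ν) hs.le) (by positivity) (by positivity)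
        _ = |M μ ν| * (s * |u 3|) := by ring
    have h2 : ‖u ν • (M μ ν • (s • pr μ))‖ ≤ |M μ ν| * (s * |u 3|) := by
      rw [norm_smul (u ν) (M μ ν • (s • pr μ)), norm_smul (M μ ν) (s • pr μ),
        norm_smul s (pr μ), Real.norm_eq_abs, Real.norm_eq_abs, Real.norm_eq_abs,
        abs_of_pos hs]
      calc |u ν| * (|M μ ν| * (s * ‖pr μ‖)) ≤ |u 3| * (|M μ ν| * (s * 1)) :=
            mul_le_mul (hU ν)
              (mul_le_mul_of_nonneg_left (mul_le_mul_of_nonneg_left (pr_norm_le μ) hs.le)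
                (abs_nonneg _)) (by positivity) (abs_nonneg _)
        _ = |M μ ν| * (s * |u 3|) := by ring
    calc _ ≤ |M μ ν| * (s * |u 3|) + |M μ ν| * (s * |u 3|) := add_le_add h1 h2
      _ = |M μ ν| * (2 * s * |u 3|) := by ring
  calc ‖DQ M s u‖ ≤ ∑ μ, ‖∑ ν, ((M μ ν * u μ) • (s • pr ν) + u ν • (M μ ν • (s • pr μ)))‖ :=
        norm_sum_le _ _
    _ ≤ ∑ μ, ∑ ν, ‖(M μ ν * u μ) • (s • pr ν) + u ν • (M μ ν • (s • pr μ))‖ := by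
        apply Finset.sum_le_sum; intro μ _; exact norm_sum_le _ _
    _ ≤ ∑ μ, ∑ ν, |M μ ν| * (2 * s * |u 3|) := by
        apply Finset.sum_le_sum; intro μ _; apply Finset.sum_le_sum; intro ν _; exact h μ ν
    _ = 2 * s * CW M * |u 3| := by
        simp only [CW, Finset.sum_mul, Finset.mul_sum]
        apply Finset.sum_congr rfl; intro μ _
        apply Finset.sum_congr rfl; intro ν _
        ring

lemma DN_bound (hs : 0 < s) (hU : ∀ k, |u k| ≤ |u 3|) :
    ‖DN s u‖ ≤ 8 * (s * |u 3|) := by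
  have h : ∀ k : Fin 4, ‖(2 * u k) • (s • pr k)‖ ≤ 2 * (s * |u 3|) := by
    intro k
    rw [norm_smul (2 * u k) (s • pr k), norm_smul s (pr k), Real.norm_eq_abs,
      Real.norm_eq_abs, abs_of_pos hs, abs_mul]
    calc |(2:ℝ)| * |u k| * (s * ‖pr k‖) ≤ |(2:ℝ)| * |u 3| * (s * 1) :=
          mul_le_mul (mul_le_mul_of_nonneg_left (hU k) (abs_nonneg _))
            (mul_le_mul_of_nonneg_left (pr_norm_le k) hs.le) (by positivity) (by positivity)
      _ = 2 * (s * |u 3|) := by rw [abs_two]; ring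
  calc ‖DN s u‖ ≤ ∑ k, ‖(2 * u k) • (s • pr k)‖ := norm_sum_le _ _
    _ ≤ ∑ _k : Fin 4, 2 * (s * |u 3|) := Finset.sum_le_sum (fun k _ => h k)
    _ = 8 * (s * |u 3|) := by simp; ring

lemma Nf_lower (u : Fin 4 → ℝ) : |u 3| ^ 2 ≤ Nf u := by
  rw [sq_abs]
  exact Finset.single_le_sum (f := fun k => u k ^ 2) (fun k _ => sq_nonneg _)
    (Finset.mem_univ 3)


lemma Ff_bound (M : Fin 4 → Fin 4 → ℝ) (e : Fin 4 → ℝ) (s : ℝ) (y : Fin 4 → ℝ) {m : ℝ}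
    (hm0 : 0 < m) (hm : m ≤ |(phi e s y) 3|) (hU : ∀ k, |(phi e s y) k| ≤ |(phi e s y) 3|) :
    |Ff M e s y| ≤ CW M / m ^ 2 := by
  set u := phi e s y with hu
  set U := |u 3| with hUdef
  have hU0 : 0 < U := lt_of_lt_of_le hm0 hm
  have hnn : U ^ 2 ≤ Nf u := Nf_lower u
  have hnn0 : 0 < Nf u := lt_of_lt_of_le (by positivity) hnn
  have hq : |Qf M u| ≤ CW M * U ^ 2 := Qf_bound hU
  calc |Ff M e s y| = |Qf M u| / (Nf u) ^ 2 := by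
        rw [Ff, abs_div, abs_of_pos (pow_pos hnn0 2)]
    _ ≤ (CW M * U ^ 2) / (U ^ 2) ^ 2 := by
        apply div_le_div₀ (mul_nonneg (CW_nonneg M) (by positivity)) hq (by positivity)
        exact pow_le_pow_left₀ (by positivity) hnn 2
    _ = CW M / U ^ 2 := by
        field_simp
    _ ≤ CW M / m ^ 2 := by gcongr; exact CW_nonneg M

lemma DF_bound (M : Fin 4 → Fin 4 → ℝ) (e : Fin 4 → ℝ) (s : ℝ) (y : Fin 4 → ℝ) {m : ℝ}
    (hs : 0 < s) (hm0 : 0 < m) (hm : m ≤ |(phi e s y) 3|)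
    (hU : ∀ k, |(phi e s y) k| ≤ |(phi e s y) 3|) :
    ‖DF M e s y‖ ≤ 18 * CW M * s / m ^ 3 := by
  set u := phi e s y with hu
  set U := |u 3| with hUdef
  have hU0 : 0 < U := lt_of_lt_of_le hm0 hm
  have hnn : U ^ 2 ≤ Nf u := Nf_lower u
  have hnn0 : 0 < Nf u := lt_of_lt_of_le (by positivity) hnn
  have hq : |Qf M u| ≤ CW M * U ^ 2 := Qf_bound hU
  have hdq : ‖DQ M s u‖ ≤ 2 * s * CW M * U := DQ_bound hs hU
  have hdn : ‖DN s u‖ ≤ 8 * (s * U) := DN_bound hs hU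
  have step1 : ‖DF M e s y‖ ≤
      |Qf M u| * ((((Nf u) ^ 2) ^ 2)⁻¹ * (2 * (Nf u * ‖DN s u‖)))
        + ((Nf u) ^ 2)⁻¹ * ‖DQ M s u‖ := by
    rw [DF]
    simp only [← hu]
    refine (norm_add_le _ _).trans (add_le_add ?_ ?_)
    · rw [norm_smul (Qf M u)
        ((-(((Nf u) ^ 2) ^ 2)⁻¹) • (Nf u • DN s u + Nf u • DN s u)), Real.norm_eq_abs]
      apply mul_le_mul_of_nonneg_left _ (abs_nonneg _)
      rw [norm_smul (-(((Nf u) ^ 2) ^ 2)⁻¹) (Nf u • DN s u + Nf u • DN s u),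
        Real.norm_eq_abs, abs_neg, abs_inv,
        abs_of_pos (pow_pos (pow_pos hnn0 2) 2)]
      apply mul_le_mul_of_nonneg_left _ (by positivity)
      refine (norm_add_le _ _).trans ?_
      rw [norm_smul (Nf u) (DN s u), Real.norm_eq_abs, abs_of_pos hnn0]
      ring_nf
      nlinarith [hnn0, norm_nonneg (DN s u)]
    · rw [norm_smul (((Nf u) ^ 2)⁻¹) (DQ M s u), Real.norm_eq_abs, abs_inv,
        abs_of_pos (pow_pos hnn0 2)]
  have key1 : |Qf M u| * ((((Nf u) ^ 2) ^ 2)⁻¹ * (2 * (Nf u * ‖DN s u‖)))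
      ≤ 16 * CW M * s / m ^ 3 := by
    have h1 : |Qf M u| * ((((Nf u) ^ 2) ^ 2)⁻¹ * (2 * (Nf u * ‖DN s u‖)))
        ≤ (CW M * U ^ 2) * ((((Nf u) ^ 2) ^ 2)⁻¹ * (2 * (Nf u * (8 * (s * U))))) := by
      gcongr
      exact mul_nonneg (CW_nonneg M) (by positivity)
    refine h1.trans ?_
    have h2 : (CW M * U ^ 2) * ((((Nf u) ^ 2) ^ 2)⁻¹ * (2 * (Nf u * (8 * (s * U)))))
        = 16 * CW M * s * (U ^ 3 * Nf u / ((Nf u) ^ 2) ^ 2) := by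
      rw [div_eq_mul_inv]; ring
    rw [h2]
    have h3 : U ^ 3 * Nf u / ((Nf u) ^ 2) ^ 2 ≤ 1 / m ^ 3 := by
      rw [div_le_div_iff₀ (by positivity) (by positivity)]
      have hm3 : m ^ 3 ≤ U ^ 3 := pow_le_pow_left₀ hm0.le hm 3
      have h6 : (U ^ 2) ^ 3 ≤ (Nf u) ^ 3 := pow_le_pow_left₀ (by positivity) hnn 3
      calc U ^ 3 * Nf u * m ^ 3 ≤ U ^ 3 * Nf u * U ^ 3 := by
            apply mul_le_mul_of_nonneg_left hm3 (by positivity)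
        _ = (U ^ 2) ^ 3 * Nf u := by ring
        _ ≤ (Nf u) ^ 3 * Nf u := mul_le_mul_of_nonneg_right h6 hnn0.le
        _ = 1 * ((Nf u) ^ 2) ^ 2 := by ring
    calc 16 * CW M * s * (U ^ 3 * Nf u / ((Nf u) ^ 2) ^ 2)
        ≤ 16 * CW M * s * (1 / m ^ 3) := by
          apply mul_le_mul_of_nonneg_left h3
            (mul_nonneg (mul_nonneg (by norm_num) (CW_nonneg M)) hs.le)
      _ = 16 * CW M * s / m ^ 3 := by ring
  have key2 : ((Nf u) ^ 2)⁻¹ * ‖DQ M s u‖ ≤ 2 * CW M * s / m ^ 3 := by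
    have h1 : ((Nf u) ^ 2)⁻¹ * ‖DQ M s u‖ ≤ ((Nf u) ^ 2)⁻¹ * (2 * s * CW M * U) := by
      apply mul_le_mul_of_nonneg_left hdq (by positivity)
    refine h1.trans ?_
    have h2 : ((Nf u) ^ 2)⁻¹ * (2 * s * CW M * U) = 2 * CW M * s * (U / (Nf u) ^ 2) := by
      rw [div_eq_mul_inv]; ring
    rw [h2]
    have h3 : U / (Nf u) ^ 2 ≤ 1 / m ^ 3 := by
      rw [div_le_div_iff₀ (by positivity) (by positivity)]
      have hm3 : m ^ 3 ≤ U ^ 3 := pow_le_pow_left₀ hm0.le hm 3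
      have h4 : (U ^ 2) ^ 2 ≤ (Nf u) ^ 2 := pow_le_pow_left₀ (by positivity) hnn 2
      calc U * m ^ 3 ≤ U * U ^ 3 := mul_le_mul_of_nonneg_left hm3 hU0.le
        _ = (U ^ 2) ^ 2 := by ring
        _ ≤ (Nf u) ^ 2 := h4
        _ = 1 * (Nf u) ^ 2 := by ring
    calc 2 * CW M * s * (U / (Nf u) ^ 2) ≤ 2 * CW M * s * (1 / m ^ 3) := by
          apply mul_le_mul_of_nonneg_left h3
            (mul_nonneg (mul_nonneg (by norm_num) (CW_nonneg M)) hs.le)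
      _ = 2 * CW M * s / m ^ 3 := by ring
  exact step1.trans ((add_le_add key1 key2).trans (le_of_eq (by ring)))

end bounds


/-! values at `-e₄` -/

def E4 : Fin 4 → ℝ := fun k => if k = 3 then 1 else 0

lemma phi_neg (s : ℝ) : phi E4 s (-E4) = fun k => if k = 3 then 1 - s else 0 := by
  funext k
  simp only [phi, E4, Pi.neg_apply]
  split <;> ring

lemma Nf_at (s : ℝ) : Nf (phi E4 s (-E4)) = (1 - s) ^ 2 := by
  rw [phi_neg, Nf, Fin.sum_univ_four]
  simp

lemma Qf_at (M : Fin 4 → Fin 4 → ℝ) (s : ℝ) :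
    Qf M (phi E4 s (-E4)) = M 3 3 * (1 - s) ^ 2 := by
  rw [phi_neg, Qf]
  simp [Fin.sum_univ_four]
  ring

lemma Ff_at (M : Fin 4 → Fin 4 → ℝ) {s : ℝ} (hs : s ≠ 1) :
    Ff M E4 s (-E4) = M 3 3 / (1 - s) ^ 2 := by
  have h : (1 - s) ≠ 0 := sub_ne_zero.mpr (Ne.symm hs)
  rw [Ff, Qf_at, Nf_at]
  field_simp

/-- derivative of the linear gauge term -/
def DG (M : Fin 4 → Fin 4 → ℝ) : (Fin 4 → ℝ) →L[ℝ] ℝ :=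
  (∑ k, (M k 3 + M 3 k) • pr k) - (4 * M 3 3) • pr 3

lemma DF_at (M : Fin 4 → Fin 4 → ℝ) {s : ℝ} (hs : s ≠ 1) :
    DF M E4 s (-E4) = (s / (1 - s) ^ 3) • DG M := by
  have h : (1 - s) ≠ 0 := sub_ne_zero.mpr (Ne.symm hs)
  ext x
  rw [DF, Qf_at, Nf_at, phi_neg]
  simp only [DQ, DN, DG, pr,
    ContinuousLinearMap.add_apply, ContinuousLinearMap.sub_apply,
    ContinuousLinearMap.smul_apply, ContinuousLinearMap.coe_sum',
    Finset.sum_apply, ContinuousLinearMap.proj_apply, smul_eq_mul,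
    Fin.sum_univ_four,
    show ((0:Fin 4) = 3) = False by simp, show ((1:Fin 4) = 3) = False by simp,
    show ((2:Fin 4) = 3) = False by simp, if_false, if_true, eq_self_iff_true,
    mul_zero, zero_mul, mul_one, add_zero, zero_add, mul_ite, ite_mul]
  field_simp
  ring


section decay

variable {t r s : ℝ}

lemma r_pos (ht : 1 < t) (hrdef : r = (t - 1) / (2 * t)) : 0 < r := by
  rw [hrdef]
  have h1 : 0 < t - 1 := by linarith
  have h2 : 0 < 2 * t := by linarith
  exact div_pos h1 h2

lemma two_rs_le (ht : 1 < t) (hrdef : r = (t - 1) / (2 * t)) (hs : t ≤ s) :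
    2 * r * s ≤ s - 1 := by
  have ht0 : 0 < t := lt_trans one_pos ht
  have h1 : 2 * r * s = s - s / t := by rw [hrdef]; field_simp
  have h2 : 1 ≤ s / t := (one_le_div ht0).mpr hs
  linarith

lemma two_r_le (ht : 1 < t) (hrdef : r = (t - 1) / (2 * t)) (hs : t ≤ s) :
    2 * r ≤ 1 - s⁻¹ := by
  have ht0 : 0 < t := lt_trans one_pos ht
  have h1 : 2 * r = 1 - t⁻¹ := by rw [hrdef]; field_simp
  have h2 : s⁻¹ ≤ t⁻¹ := inv_anti₀ ht0 hs
  linarith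

lemma coords (hr0 : 0 < r) {σ : ℝ} (hσ : 0 < σ) {y : Fin 4 → ℝ} (hy : ‖y + E4‖ < r) :
    |1 - σ| - σ * r ≤ |phi E4 σ y 3| ∧ ∀ k, k ≠ 3 → |phi E4 σ y k| ≤ σ * r := by
  have h3 : |y 3 + 1| ≤ ‖y + E4‖ := by
    have := norm_le_pi_norm (y + E4) 3
    simpa [E4] using this
  have h3r : |y 3 + 1| ≤ r := h3.trans hy.le
  constructor
  · have he : phi E4 σ y 3 = σ * (y 3 + 1) + (1 - σ) := by simp [phi, E4]; ring
    rw [he]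
    have habs : |1 - σ| ≤ |σ * (y 3 + 1) + (1 - σ)| + |σ * (y 3 + 1)| := by
      have := abs_add_le (σ * (y 3 + 1) + (1 - σ)) (-(σ * (y 3 + 1)))
      simpa using this
    have h4 : |σ * (y 3 + 1)| ≤ σ * r := by
      rw [abs_mul, abs_of_pos hσ]
      exact mul_le_mul_of_nonneg_left h3r hσ.le
    linarith
  · intro k hk
    have he : phi E4 σ y k = σ * y k := by simp [phi, E4, hk]
    have hyk : |y k| ≤ r := by
      have := norm_le_pi_norm (y + E4) k
      simp only [Pi.add_apply, Real.norm_eq_abs] at this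
      have hE : E4 k = 0 := by simp [E4, hk]
      rw [hE, add_zero] at this
      exact this.trans hy.le
    rw [he, abs_mul, abs_of_pos hσ]
    exact mul_le_mul_of_nonneg_left hyk hσ.le

lemma case1 (ht : 1 < t) (hrdef : r = (t - 1) / (2 * t)) (hs : t ≤ s)
    {y : Fin 4 → ℝ} (hy : ‖y + E4‖ < r) :
    r * s ≤ |phi E4 s y 3| ∧ ∀ k, |phi E4 s y k| ≤ |phi E4 s y 3| := by
  have hr0 : 0 < r := r_pos ht hrdef
  have hs1 : 1 < s := lt_of_lt_of_le ht hs
  have hs0 : 0 < s := lt_trans one_pos hs1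
  obtain ⟨h1, h2⟩ := coords hr0 hs0 hy
  have ha : 2 * r * s ≤ s - 1 := two_rs_le ht hrdef hs
  have habs : |1 - s| = s - 1 := by rw [abs_sub_comm, abs_of_pos (by linarith)]
  have hm : r * s ≤ |phi E4 s y 3| := by rw [habs] at h1; linarith
  refine ⟨hm, fun k => ?_⟩
  by_cases hk : k = 3
  · subst hk; exact le_refl _
  · exact (h2 k hk).trans (by linarith)

lemma case2 (ht : 1 < t) (hrdef : r = (t - 1) / (2 * t)) (hs : t ≤ s)
    {y : Fin 4 → ℝ} (hy : ‖y + E4‖ < r) :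
    r ≤ |phi E4 s⁻¹ y 3| ∧ ∀ k, |phi E4 s⁻¹ y k| ≤ |phi E4 s⁻¹ y 3| := by
  have hr0 : 0 < r := r_pos ht hrdef
  have hs1 : 1 < s := lt_of_lt_of_le ht hs
  have hs0 : 0 < s := lt_trans one_pos hs1
  have hσ0 : 0 < s⁻¹ := by positivity
  have hσ1 : s⁻¹ < 1 := inv_lt_one_of_one_lt₀ hs1
  obtain ⟨h1, h2⟩ := coords hr0 hσ0 hy
  have hb : 2 * r ≤ 1 - s⁻¹ := two_r_le ht hrdef hs
  have habs : |1 - s⁻¹| = 1 - s⁻¹ := abs_of_pos (by linarith)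
  have hσr : s⁻¹ * r ≤ r := mul_le_of_le_one_left hr0.le hσ1.le
  have hm : r ≤ |phi E4 s⁻¹ y 3| := by rw [habs] at h1; linarith
  refine ⟨hm, fun k => ?_⟩
  by_cases hk : k = 3
  · subst hk; exact le_refl _
  · exact (h2 k hk).trans (by linarith)

variable {M : Fin 4 → Fin 4 → ℝ} {y : Fin 4 → ℝ}

lemma DF_decay1 (ht : 1 < t) (hrdef : r = (t - 1) / (2 * t)) (hs : t ≤ s)
    (hy : ‖y + E4‖ < r) : ‖DF M E4 s y‖ ≤ (18 * CW M / r ^ 3) * s⁻¹ := by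
  have hr0 : 0 < r := r_pos ht hrdef
  have hs1 : 1 < s := lt_of_lt_of_le ht hs
  have hs0 : 0 < s := lt_trans one_pos hs1
  obtain ⟨hm, hU⟩ := case1 ht hrdef hs hy
  have h := DF_bound M E4 s y hs0 (by positivity : 0 < r * s) hm hU
  refine h.trans ?_
  have he : 18 * CW M * s / (r * s) ^ 3 = (18 * CW M / r ^ 3) * (s⁻¹ * s⁻¹) := by
    field_simp
  rw [he]
  apply mul_le_mul_of_nonneg_left
  · exact mul_le_of_le_one_left (by positivity) (inv_le_one_of_one_le₀ hs1.le)
  · apply div_nonneg _ (by positivity)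
    linarith [CW_nonneg M]

lemma DF_decay2 (ht : 1 < t) (hrdef : r = (t - 1) / (2 * t)) (hs : t ≤ s)
    (hy : ‖y + E4‖ < r) : ‖DF M E4 s⁻¹ y‖ ≤ (18 * CW M / r ^ 3) * s⁻¹ := by
  have hr0 : 0 < r := r_pos ht hrdef
  have hs1 : 1 < s := lt_of_lt_of_le ht hs
  have hs0 : 0 < s := lt_trans one_pos hs1
  obtain ⟨hm, hU⟩ := case2 ht hrdef hs (y := y) hy
  have h := DF_bound M E4 s⁻¹ y (by positivity) hr0 hm hU
  refine h.trans (le_of_eq ?_)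
  ring

lemma Ff_decay1 (ht : 1 < t) (hrdef : r = (t - 1) / (2 * t)) (hs : t ≤ s)
    (hy : ‖y + E4‖ < r) : |Ff M E4 s y| ≤ (CW M / r ^ 2) * s⁻¹ := by
  have hr0 : 0 < r := r_pos ht hrdef
  have hs1 : 1 < s := lt_of_lt_of_le ht hs
  have hs0 : 0 < s := lt_trans one_pos hs1
  obtain ⟨hm, hU⟩ := case1 ht hrdef hs hy
  have h := Ff_bound M E4 s y (by positivity : 0 < r * s) hm hU
  refine h.trans ?_
  have he : CW M / (r * s) ^ 2 = (CW M / r ^ 2) * (s⁻¹ * s⁻¹) := by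
    rw [mul_pow, div_mul_eq_div_div, div_eq_mul_inv (CW M / r ^ 2), sq s, mul_inv]
  rw [he]
  apply mul_le_mul_of_nonneg_left
  · exact mul_le_of_le_one_left (by positivity) (inv_le_one_of_one_le₀ hs1.le)
  · exact div_nonneg (CW_nonneg M) (by positivity)


lemma cd_decay (ht : 1 < t) (hrdef : r = (t - 1) / (2 * t)) (hs : t ≤ s) :
    |s / (1 - s) ^ 3 + s⁻¹ / (1 - s⁻¹) ^ 3| ≤ (2 / r ^ 3) * s⁻¹ := by
  have hr0 : 0 < r := r_pos ht hrdef
  have hs1 : 1 < s := lt_of_lt_of_le ht hs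
  have hs0 : 0 < s := lt_trans one_pos hs1
  have hσ0 : 0 < s⁻¹ := by positivity
  have hσ1 : s⁻¹ < 1 := inv_lt_one_of_one_lt₀ hs1
  have ha : 2 * r * s ≤ s - 1 := two_rs_le ht hrdef hs
  have hb : 2 * r ≤ 1 - s⁻¹ := two_r_le ht hrdef hs
  have h1 : |s / (1 - s) ^ 3| = s / (s - 1) ^ 3 := by
    rw [abs_div, abs_of_pos hs0, abs_pow, abs_sub_comm, abs_of_pos (by linarith : (0:ℝ) < s - 1)]
  have h2 : |s⁻¹ / (1 - s⁻¹) ^ 3| = s⁻¹ / (1 - s⁻¹) ^ 3 := by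
    rw [abs_div, abs_of_pos hσ0, abs_pow, abs_of_pos (by linarith : (0:ℝ) < 1 - s⁻¹)]
  have c1 : s / (s - 1) ^ 3 ≤ s / (2 * r * s) ^ 3 := by
    apply div_le_div_of_nonneg_left hs0.le (by positivity)
    exact pow_le_pow_left₀ (by positivity) ha 3
  have c1' : s / (2 * r * s) ^ 3 = (1 / (8 * r ^ 3)) * (s⁻¹ * s⁻¹) := by
    field_simp; ring
  have c2 : s⁻¹ / (1 - s⁻¹) ^ 3 ≤ s⁻¹ / (2 * r) ^ 3 := by
    apply div_le_div_of_nonneg_left hσ0.le (by positivity)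
    exact pow_le_pow_left₀ (by positivity) hb 3
  have c2' : s⁻¹ / (2 * r) ^ 3 = (1 / (8 * r ^ 3)) * s⁻¹ := by
    field_simp; ring
  have hinv : s⁻¹ * s⁻¹ ≤ s⁻¹ := mul_le_of_le_one_left hσ0.le hσ1.le
  calc |s / (1 - s) ^ 3 + s⁻¹ / (1 - s⁻¹) ^ 3|
      ≤ |s / (1 - s) ^ 3| + |s⁻¹ / (1 - s⁻¹) ^ 3| := abs_add_le _ _
    _ ≤ (1 / (8 * r ^ 3)) * (s⁻¹ * s⁻¹) + (1 / (8 * r ^ 3)) * s⁻¹ := by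
        rw [h1, h2]
        exact add_le_add (c1.trans (le_of_eq c1')) (c2.trans (le_of_eq c2'))
    _ ≤ (1 / (8 * r ^ 3)) * s⁻¹ + (1 / (8 * r ^ 3)) * s⁻¹ :=
        add_le_add_left (mul_le_mul_of_nonneg_left hinv (by positivity)) _
    _ ≤ (2 / r ^ 3) * s⁻¹ := by
        rw [← add_mul]
        apply mul_le_mul_of_nonneg_right _ hσ0.le
        rw [div_add_div _ _ (by positivity : (8:ℝ) * r ^ 3 ≠ 0) (by positivity : (8:ℝ) * r ^ 3 ≠ 0),
          div_le_div_iff₀ (by positivity) (by positivity)]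
        nlinarith [pow_pos hr0 3, pow_pos (pow_pos hr0 3) 2]

lemma b_decay (ht : 1 < t) (hrdef : r = (t - 1) / (2 * t)) (hs : t ≤ s) :
    |1 / (1 - s⁻¹) ^ 2 - 1| ≤ (2 / r ^ 2) * s⁻¹ := by
  have hr0 : 0 < r := r_pos ht hrdef
  have hs1 : 1 < s := lt_of_lt_of_le ht hs
  have hs0 : 0 < s := lt_trans one_pos hs1
  have hσ0 : 0 < s⁻¹ := by positivity
  have hσ1 : s⁻¹ < 1 := inv_lt_one_of_one_lt₀ hs1
  have hb : 2 * r ≤ 1 - s⁻¹ := two_r_le ht hrdef hs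
  have hσne : (1 - s⁻¹) ≠ 0 := by linarith
  have hbpos : 0 < (1 - s⁻¹) ^ 2 := by positivity
  have hble : (1 - s⁻¹) ^ 2 ≤ 1 := by nlinarith
  have hnonneg : 0 ≤ 1 / (1 - s⁻¹) ^ 2 - 1 := by
    have := one_le_one_div hbpos hble
    linarith
  have heq : 1 / (1 - s⁻¹) ^ 2 - 1 = s⁻¹ * (2 - s⁻¹) / (1 - s⁻¹) ^ 2 := by
    have hgen : ∀ σ : ℝ, (1 - σ) ≠ 0 → 1 / (1 - σ) ^ 2 - 1 = σ * (2 - σ) / (1 - σ) ^ 2 := by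
      intro σ hσ; field_simp; ring
    exact hgen s⁻¹ hσne
  rw [abs_of_nonneg hnonneg, heq]
  have step : s⁻¹ * (2 - s⁻¹) / (1 - s⁻¹) ^ 2 ≤ (2 * s⁻¹) / (2 * r) ^ 2 := by
    apply div_le_div₀ (by positivity) (by nlinarith) (by positivity)
    exact pow_le_pow_left₀ (by positivity) hb 2
  refine step.trans ?_
  have : (2 * s⁻¹) / (2 * r) ^ 2 = (1 / (2 * r ^ 2)) * s⁻¹ := by field_simp
  rw [this]
  apply mul_le_mul_of_nonneg_right _ hσ0.le
  rw [div_le_div_iff₀ (by positivity) (by positivity)]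
  nlinarith [pow_pos hr0 2]

lemma ab_decay (ht : 1 < t) (hrdef : r = (t - 1) / (2 * t)) (hs : t ≤ s) :
    |1 / (1 - s) ^ 2 + (1 / (1 - s⁻¹) ^ 2 - 1)| ≤ (3 / r ^ 2) * s⁻¹ := by
  have hr0 : 0 < r := r_pos ht hrdef
  have hs1 : 1 < s := lt_of_lt_of_le ht hs
  have hs0 : 0 < s := lt_trans one_pos hs1
  have hσ0 : 0 < s⁻¹ := by positivity
  have hσ1 : s⁻¹ < 1 := inv_lt_one_of_one_lt₀ hs1
  have ha : 2 * r * s ≤ s - 1 := two_rs_le ht hrdef hs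
  have h1 : |1 / (1 - s) ^ 2| = 1 / (s - 1) ^ 2 := by
    rw [abs_div, abs_pow, abs_sub_comm, abs_of_pos (by linarith : (0:ℝ) < s - 1), abs_one]
  have c1 : 1 / (s - 1) ^ 2 ≤ 1 / (2 * r * s) ^ 2 := by
    apply div_le_div_of_nonneg_left zero_le_one (by positivity)
    exact pow_le_pow_left₀ (by positivity) ha 2
  have c1' : 1 / (2 * r * s) ^ 2 = (1 / (4 * r ^ 2)) * (s⁻¹ * s⁻¹) := by
    field_simp; ring
  have hinv : s⁻¹ * s⁻¹ ≤ s⁻¹ := mul_le_of_le_one_left hσ0.le hσ1.le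
  calc |1 / (1 - s) ^ 2 + (1 / (1 - s⁻¹) ^ 2 - 1)|
      ≤ |1 / (1 - s) ^ 2| + |1 / (1 - s⁻¹) ^ 2 - 1| := abs_add_le _ _
    _ ≤ (1 / (4 * r ^ 2)) * (s⁻¹ * s⁻¹) + (2 / r ^ 2) * s⁻¹ := by
        rw [h1]
        exact add_le_add (c1.trans (le_of_eq c1')) (b_decay ht hrdef hs)
    _ ≤ (1 / (4 * r ^ 2)) * s⁻¹ + (2 / r ^ 2) * s⁻¹ :=
        add_le_add_left (mul_le_mul_of_nonneg_left hinv (by positivity)) _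
    _ ≤ (3 / r ^ 2) * s⁻¹ := by
        rw [← add_mul]
        apply mul_le_mul_of_nonneg_right _ hσ0.le
        rw [div_add_div _ _ (by positivity) (by positivity), div_le_div_iff₀ (by positivity) (by positivity)]
        nlinarith [pow_pos hr0 2, pow_pos (pow_pos hr0 2) 2]

lemma summable_geom_aux {t : ℝ} (ht : 1 < t) (c : ℝ) :
    Summable (fun n : ℕ => c * (t ^ (n + 1))⁻¹) := by
  have ht0 : 0 < t := lt_trans one_pos ht
  have heq : (fun n : ℕ => c * (t ^ (n + 1))⁻¹) = fun n : ℕ => (c * t⁻¹) * (t⁻¹) ^ n := by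
    funext n
    rw [← inv_pow, pow_succ']
    ring
  rw [heq]
  exact (summable_geometric_of_lt_one (by positivity) (inv_lt_one_of_one_lt₀ ht)).mul_left _

end decay


/-! the combined series terms -/

def Gf (M : Fin 4 → Fin 4 → ℝ) (y : Fin 4 → ℝ) : ℝ :=
  (∑ k, (M k 3 + M 3 k) * (y k + E4 k)) - 4 * M 3 3 * (y 3 + E4 3)

def cdf (t : ℝ) (n : ℕ) : ℝ :=
  t ^ (n + 1) / (1 - t ^ (n + 1)) ^ 3 + (t ^ (n + 1))⁻¹ / (1 - (t ^ (n + 1))⁻¹) ^ 3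

def abf (t : ℝ) (n : ℕ) : ℝ :=
  1 / (1 - t ^ (n + 1)) ^ 2 + 1 / (1 - (t ^ (n + 1))⁻¹) ^ 2 - 1

def ff (M : Fin 4 → Fin 4 → ℝ) (t : ℝ) (n : ℕ) (y : Fin 4 → ℝ) : ℝ :=
  (-(1/3) * Ff M E4 (t ^ (n + 1)) y - (1/3) * (Ff M E4 (t ^ (n + 1))⁻¹ y - M 3 3))
    + (1/3) * (abf t n * M 3 3 + cdf t n * Gf M y)

def ff' (M : Fin 4 → Fin 4 → ℝ) (t : ℝ) (n : ℕ) (y : Fin 4 → ℝ) : (Fin 4 → ℝ) →L[ℝ] ℝ :=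
  ((-(1/3 : ℝ)) • DF M E4 (t ^ (n + 1)) y - (1/3 : ℝ) • DF M E4 (t ^ (n + 1))⁻¹ y)
    + (1/3 : ℝ) • (cdf t n • DG M)

variable {t r : ℝ} {M : Fin 4 → Fin 4 → ℝ}

lemma hasFDerivAt_Gf (M : Fin 4 → Fin 4 → ℝ) (y : Fin 4 → ℝ) :
    HasFDerivAt (Gf M) (DG M) y := by
  have h1 : HasFDerivAt (fun y : Fin 4 → ℝ => ∑ k, (M k 3 + M 3 k) * (y k + E4 k))
      (∑ k, (M k 3 + M 3 k) • pr k) y := by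
    apply HasFDerivAt.fun_sum
    intro k _
    exact (((pr k).hasFDerivAt).add_const (E4 k)).const_mul _
  have h2 : HasFDerivAt (fun y : Fin 4 → ℝ => 4 * M 3 3 * (y 3 + E4 3))
      ((4 * M 3 3) • pr 3) y := (((pr 3).hasFDerivAt).add_const (E4 3)).const_mul _
  exact h1.sub h2

lemma Gf_at (M : Fin 4 → Fin 4 → ℝ) : Gf M (-E4) = 0 := by
  simp [Gf]

lemma one_lt_s (ht : 1 < t) (n : ℕ) : 1 < t ^ (n + 1) := one_lt_pow₀ ht (Nat.succ_ne_zero n)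

lemma t_le_s (ht : 1 < t) (n : ℕ) : t ≤ t ^ (n + 1) := le_self_pow₀ ht.le (Nat.succ_ne_zero n)

lemma ff_at (ht : 1 < t) (n : ℕ) : ff M t n (-E4) = 0 := by
  rw [ff, Ff_at M (one_lt_s ht n).ne', Ff_at M (inv_lt_one_of_one_lt₀ (one_lt_s ht n)).ne, Gf_at, abf]
  ring

lemma ff'_at (ht : 1 < t) (n : ℕ) : ff' M t n (-E4) = 0 := by
  rw [ff', DF_at M (one_lt_s ht n).ne', DF_at M (inv_lt_one_of_one_lt₀ (one_lt_s ht n)).ne, cdf]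
  ext x
  simp only [ContinuousLinearMap.add_apply, ContinuousLinearMap.sub_apply,
    ContinuousLinearMap.smul_apply, ContinuousLinearMap.zero_apply, smul_eq_mul]
  ring

lemma mem_ball_norm {y : Fin 4 → ℝ} (hy : y ∈ Metric.ball (-E4) r) : ‖y + E4‖ < r := by
  rw [Metric.mem_ball, dist_eq_norm, sub_neg_eq_add] at hy
  exact hy

lemma Nf_ne1 (ht : 1 < t) (hrdef : r = (t - 1) / (2 * t)) (n : ℕ) {y : Fin 4 → ℝ}
    (hy : y ∈ Metric.ball (-E4) r) : Nf (phi E4 (t ^ (n + 1)) y) ≠ 0 := by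
  have hr0 : 0 < r := r_pos ht hrdef
  have hs0 : 0 < t ^ (n + 1) := lt_trans one_pos (one_lt_s ht n)
  have h := (case1 ht hrdef (t_le_s ht n) (mem_ball_norm hy)).1
  refine ne_of_gt (lt_of_lt_of_le ?_ ((pow_le_pow_left₀ (by positivity) h 2).trans (Nf_lower _)))
  positivity

lemma Nf_ne2 (ht : 1 < t) (hrdef : r = (t - 1) / (2 * t)) (n : ℕ) {y : Fin 4 → ℝ}
    (hy : y ∈ Metric.ball (-E4) r) : Nf (phi E4 (t ^ (n + 1))⁻¹ y) ≠ 0 := by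
  have hr0 : 0 < r := r_pos ht hrdef
  have h := (case2 ht hrdef (t_le_s ht n) (mem_ball_norm hy)).1
  refine ne_of_gt (lt_of_lt_of_le ?_ ((pow_le_pow_left₀ hr0.le h 2).trans (Nf_lower _)))
  positivity

lemma hasFDerivAt_ff (ht : 1 < t) (hrdef : r = (t - 1) / (2 * t)) (n : ℕ) {y : Fin 4 → ℝ}
    (hy : y ∈ Metric.ball (-E4) r) : HasFDerivAt (ff M t n) (ff' M t n y) y := by
  have h1 := hasFDerivAt_Ff M E4 (t ^ (n + 1)) y (Nf_ne1 ht hrdef n hy)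
  have h2 := hasFDerivAt_Ff M E4 (t ^ (n + 1))⁻¹ y (Nf_ne2 ht hrdef n hy)
  exact ((h1.const_mul (-(1/3))).sub ((h2.sub_const (M 3 3)).const_mul (1/3))).add
    ((((hasFDerivAt_Gf M y).const_mul (cdf t n)).const_add (abf t n * M 3 3)).const_mul (1/3))

lemma ff'_bound (ht : 1 < t) (hrdef : r = (t - 1) / (2 * t)) (n : ℕ) {y : Fin 4 → ℝ}
    (hy : y ∈ Metric.ball (-E4) r) :
    ‖ff' M t n y‖ ≤ (1/3) * ((18 * CW M / r ^ 3) * (t ^ (n + 1))⁻¹)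
      + (1/3) * ((18 * CW M / r ^ 3) * (t ^ (n + 1))⁻¹)
      + (1/3) * (((2 / r ^ 3) * (t ^ (n + 1))⁻¹) * ‖DG M‖) := by
  have hyr := mem_ball_norm hy
  have b1 := DF_decay1 (M := M) ht hrdef (t_le_s ht n) hyr
  have b2 := DF_decay2 (M := M) ht hrdef (t_le_s ht n) hyr
  have b3 : |cdf t n| ≤ (2 / r ^ 3) * (t ^ (n + 1))⁻¹ := cd_decay ht hrdef (t_le_s ht n)
  have h1 : ‖ff' M t n y‖ ≤ (1/3) * ‖DF M E4 (t ^ (n + 1)) y‖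
      + (1/3) * ‖DF M E4 (t ^ (n + 1))⁻¹ y‖ + (1/3) * (|cdf t n| * ‖DG M‖) := by
    rw [ff']
    refine (norm_add_le _ _).trans ?_
    have e1 : ‖(-(1/3 : ℝ)) • DF M E4 (t ^ (n + 1)) y - (1/3 : ℝ) • DF M E4 (t ^ (n + 1))⁻¹ y‖
        ≤ (1/3) * ‖DF M E4 (t ^ (n + 1)) y‖ + (1/3) * ‖DF M E4 (t ^ (n + 1))⁻¹ y‖ := by
      refine (norm_sub_le _ _).trans ?_
      rw [norm_smul (-(1/3 : ℝ)) (DF M E4 (t ^ (n + 1)) y),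
        norm_smul ((1/3 : ℝ)) (DF M E4 (t ^ (n + 1))⁻¹ y), Real.norm_eq_abs, Real.norm_eq_abs]
      simp [abs_of_pos (show (0:ℝ) < 3⁻¹ by norm_num), abs_of_pos (show (0:ℝ) < 1/3 by norm_num)]
    have e2 : ‖(1/3 : ℝ) • (cdf t n • DG M)‖ = (1/3) * (|cdf t n| * ‖DG M‖) := by
      rw [norm_smul ((1/3 : ℝ)) (cdf t n • DG M), norm_smul (cdf t n) (DG M),
        Real.norm_eq_abs, Real.norm_eq_abs]
      simp [abs_of_pos (show (0:ℝ) < 3⁻¹ by norm_num), abs_of_pos (show (0:ℝ) < 1/3 by norm_num)]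
    rw [e2]
    linarith
  refine h1.trans ?_
  refine add_le_add (add_le_add ?_ ?_) ?_
  · exact mul_le_mul_of_nonneg_left b1 (by norm_num)
  · exact mul_le_mul_of_nonneg_left b2 (by norm_num)
  · exact mul_le_mul_of_nonneg_left (mul_le_mul_of_nonneg_right b3 (norm_nonneg _)) (by norm_num)

lemma summable_ffbound (ht : 1 < t) (r : ℝ) (M : Fin 4 → Fin 4 → ℝ) :
    Summable (fun n : ℕ => (1/3) * ((18 * CW M / r ^ 3) * (t ^ (n + 1))⁻¹)
      + (1/3) * ((18 * CW M / r ^ 3) * (t ^ (n + 1))⁻¹)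
      + (1/3) * (((2 / r ^ 3) * (t ^ (n + 1))⁻¹) * ‖DG M‖)) := by
  refine Summable.add (Summable.add ?_ ?_) ?_
  · exact (summable_geom_aux ht (18 * CW M / r ^ 3)).mul_left (1/3)
  · exact (summable_geom_aux ht (18 * CW M / r ^ 3)).mul_left (1/3)
  · exact ((summable_geom_aux ht (2 / r ^ 3)).mul_right ‖DG M‖).mul_left (1/3)

end StmtAux

/-- A constant 4-tensor on `ℝ⁴` with the algebraic symmetries of the Weyl tensor
(the role of the index `4` of the paper is played by `(3 : Fin 4)`). -/
def IsWeyl (W : Fin 4 → Fin 4 → Fin 4 → Fin 4 → ℝ) : Prop :=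
  (∀ k i j l, W k i j l = - W i k j l) ∧
  (∀ k i j l, W k i j l = - W k i l j) ∧
  (∀ k i j l, W k i j l = W j l k i) ∧
  (∀ k i j l, W k i j l + W i j k l + W j k i l = 0) ∧
  (∀ i j, (∑ k, W k i j k) = 0)

set_option maxHeartbeats 1000000 in
/-- The regular part `Ā` of the gauged series of pullbacks vanishes to first order
at `-e₄`: `Ā(-e₄) = 0` and `∇Ā(-e₄) = 0`. -/
theorem stmt_19 (t : ℝ) (ht : 1 < t)
    (W : Fin 4 → Fin 4 → Fin 4 → Fin 4 → ℝ) (hW : IsWeyl W)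
    (e4 : Fin 4 → ℝ) (he4 : e4 = fun k => if k = 3 then (1:ℝ) else 0)
    (C0 C1 : ℝ)
    (hC0 : C0 = ∑' n : ℕ,
      (1 / (1 - t ^ (n + 1)) ^ 2 + 1 / (1 - (t ^ (n + 1))⁻¹) ^ 2 - 1))
    (hC1 : C1 = ∑' n : ℕ,
      (t ^ (n + 1) / (1 - t ^ (n + 1)) ^ 3
        + (t ^ (n + 1))⁻¹ / (1 - (t ^ (n + 1))⁻¹) ^ 3))
    (Abar : Fin 4 → Fin 4 → (Fin 4 → ℝ) → ℝ)
    (hA : ∀ i j (y : Fin 4 → ℝ), Abar i j y =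
      -(1/3 : ℝ) * (∑' n : ℕ,
          (∑ μ, ∑ ν, W μ i j ν * (t ^ (n + 1) * y μ + e4 μ) * (t ^ (n + 1) * y ν + e4 ν))
            / (∑ k, (t ^ (n + 1) * y k + e4 k) ^ 2) ^ 2)
      - (1/3 : ℝ) * (∑' n : ℕ,
          ((∑ μ, ∑ ν, W μ i j ν * ((t ^ (n + 1))⁻¹ * y μ + e4 μ)
              * ((t ^ (n + 1))⁻¹ * y ν + e4 ν))
            / (∑ k, ((t ^ (n + 1))⁻¹ * y k + e4 k) ^ 2) ^ 2 - W 3 i j 3))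
      + (1/3 : ℝ) * (C0 * W 3 i j 3
          + C1 * ((∑ k, (W k i j 3 + W 3 i j k) * (y k + e4 k))
              - 4 * W 3 i j 3 * (y 3 + e4 3)))) :
    ∀ i j, Abar i j (-e4) = 0 ∧ fderiv ℝ (Abar i j) (-e4) = 0 := by
  intro i j
  have hE : e4 = StmtAux.E4 := by rw [he4]; rfl
  subst hE
  set M : Fin 4 → Fin 4 → ℝ := fun μ ν => W μ i j ν with hMdef
  have hrdef : (t - 1) / (2 * t) = (t - 1) / (2 * t) := rfl
  have hr0 : 0 < (t - 1) / (2 * t) := StmtAux.r_pos ht rfl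
  have hball : (-StmtAux.E4) ∈ Metric.ball (-StmtAux.E4) ((t - 1) / (2 * t)) :=
    Metric.mem_ball_self hr0
  have hsum0 : Summable (fun n => StmtAux.ff M t n (-StmtAux.E4)) := by
    simp only [StmtAux.ff_at ht]
    exact summable_zero
  have hmain : HasFDerivAt (fun y => ∑' n, StmtAux.ff M t n y)
      (∑' n, StmtAux.ff' M t n (-StmtAux.E4)) (-StmtAux.E4) :=
    hasFDerivAt_tsum_of_isPreconnected (StmtAux.summable_ffbound ht ((t - 1) / (2 * t)) M)
      Metric.isOpen_ball (convex_ball _ _).isPreconnected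
      (fun n y hy => StmtAux.hasFDerivAt_ff ht rfl n hy)
      (fun n y hy => StmtAux.ff'_bound ht rfl n hy)
      hball hsum0 hball
  have hzero : (∑' n, StmtAux.ff' M t n (-StmtAux.E4)) = (0 : (Fin 4 → ℝ) →L[ℝ] ℝ) := by
    rw [tsum_congr (fun n => StmtAux.ff'_at (M := M) ht n)]
    exact tsum_zero
  rw [hzero] at hmain
  have key : ∀ y ∈ Metric.ball (-StmtAux.E4) ((t - 1) / (2 * t)),
      Abar i j y = ∑' n, StmtAux.ff M t n y := by
    intro y hy
    have hyr := StmtAux.mem_ball_norm hy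
    have S1 : Summable (fun n : ℕ => StmtAux.Ff M StmtAux.E4 (t ^ (n + 1)) y) := by
      apply Summable.of_norm_bounded
        (StmtAux.summable_geom_aux ht (StmtAux.CW M / ((t - 1) / (2 * t)) ^ 2))
      intro n
      rw [Real.norm_eq_abs]
      exact StmtAux.Ff_decay1 ht rfl (StmtAux.t_le_s ht n) hyr
    have S2 : Summable (fun n : ℕ => StmtAux.Ff M StmtAux.E4 (t ^ (n + 1))⁻¹ y - M 3 3) := by
      refine summable_of_summable_hasFDerivAt_of_isPreconnected
        (u := fun n : ℕ => (18 * StmtAux.CW M / ((t - 1) / (2 * t)) ^ 3) * (t ^ (n + 1))⁻¹)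
        (StmtAux.summable_geom_aux ht _) Metric.isOpen_ball (convex_ball _ _).isPreconnected
        (f' := fun n z => StmtAux.DF M StmtAux.E4 (t ^ (n + 1))⁻¹ z)
        (fun n z hz => (StmtAux.hasFDerivAt_Ff M StmtAux.E4 _ z
          (StmtAux.Nf_ne2 ht rfl n hz)).sub_const (M 3 3))
        (fun n z hz => StmtAux.DF_decay2 ht rfl (StmtAux.t_le_s ht n) (StmtAux.mem_ball_norm hz))
        hball ?_ hy
      apply Summable.of_norm_bounded
        (StmtAux.summable_geom_aux ht (|M 3 3| * (2 / ((t - 1) / (2 * t)) ^ 2)))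
      intro n
      rw [Real.norm_eq_abs, StmtAux.Ff_at M (inv_lt_one_of_one_lt₀ (StmtAux.one_lt_s ht n)).ne]
      have he : M 3 3 / (1 - (t ^ (n + 1))⁻¹) ^ 2 - M 3 3
          = M 3 3 * (1 / (1 - (t ^ (n + 1))⁻¹) ^ 2 - 1) := by ring
      rw [he, abs_mul, mul_assoc]
      exact mul_le_mul_of_nonneg_left (StmtAux.b_decay ht rfl (StmtAux.t_le_s ht n)) (abs_nonneg _)
    have Sab : Summable (StmtAux.abf t) := by
      apply Summable.of_norm_bounded
        (StmtAux.summable_geom_aux ht (3 / ((t - 1) / (2 * t)) ^ 2))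
      intro n
      rw [Real.norm_eq_abs]
      have he : StmtAux.abf t n
          = 1 / (1 - t ^ (n + 1)) ^ 2 + (1 / (1 - (t ^ (n + 1))⁻¹) ^ 2 - 1) := by
        rw [StmtAux.abf]; ring
      rw [he]
      exact StmtAux.ab_decay ht rfl (StmtAux.t_le_s ht n)
    have Scd : Summable (StmtAux.cdf t) := by
      apply Summable.of_norm_bounded
        (StmtAux.summable_geom_aux ht (2 / ((t - 1) / (2 * t)) ^ 3))
      intro n
      rw [Real.norm_eq_abs]
      exact StmtAux.cd_decay ht rfl (StmtAux.t_le_s ht n)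
    have hsplit : (∑' n, StmtAux.ff M t n y)
        = (-(1/3 : ℝ) * ∑' n, StmtAux.Ff M StmtAux.E4 (t ^ (n + 1)) y
            - (1/3 : ℝ) * ∑' n, (StmtAux.Ff M StmtAux.E4 (t ^ (n + 1))⁻¹ y - M 3 3))
          + (1/3 : ℝ) * ((∑' n, StmtAux.abf t n) * M 3 3
            + (∑' n, StmtAux.cdf t n) * StmtAux.Gf M y) := by
      rw [show (fun n => StmtAux.ff M t n y) = fun n =>
          (-(1/3 : ℝ) * StmtAux.Ff M StmtAux.E4 (t ^ (n + 1)) y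
            - (1/3 : ℝ) * (StmtAux.Ff M StmtAux.E4 (t ^ (n + 1))⁻¹ y - M 3 3))
          + (1/3 : ℝ) * (StmtAux.abf t n * M 3 3 + StmtAux.cdf t n * StmtAux.Gf M y) from rfl]
      rw [Summable.tsum_add ((S1.mul_left _).sub (S2.mul_left _))
        (((Sab.mul_right _).add (Scd.mul_right _)).mul_left _)]
      rw [Summable.tsum_sub (S1.mul_left _) (S2.mul_left _)]
      rw [tsum_mul_left, tsum_mul_left, tsum_mul_left]
      rw [Summable.tsum_add (Sab.mul_right _) (Scd.mul_right _)]
      rw [tsum_mul_right, tsum_mul_right]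
    rw [hsplit, hA i j y, hC0, hC1]
    rfl
  constructor
  · rw [key _ hball, tsum_congr (fun n => StmtAux.ff_at (M := M) ht n)]
    exact tsum_zero
  · have hEq : Abar i j =ᶠ[nhds (-StmtAux.E4)] (fun y => ∑' n, StmtAux.ff M t n y) :=
      Filter.eventuallyEq_of_mem (Metric.isOpen_ball.mem_nhds hball) key
    rw [hEq.fderiv_eq]
    exact hmain.fderiv
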